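/- Let k : (0,∞) → [0,∞) be nonincreasing, let σ be Lebesgue measure on ℝ^n, and set K(Q) = k(r_Q) for Q ∈ 𝒟. Then there exists a constant C > 0, independent of Q, such that for every Q ∈ 𝒟 and every x ∈ Q, (1/C) · r_Q^{−n} ∫_0^{r_Q} k(t) t^{n−1} dt ≤ K̄(Q)(x) ≤ C · r_Q^{−n} ∫_0^{r_Q} k(t) t^{n−1} dt. -/

import Mathlib

open MeasureTheory ENNReal Set
open scoped Classical ENNReal NNReal

noncomputable section

/-- We model `ℝ^n` as `EuclideanSpace ℝ (Fin n)`. -/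
abbrev Euc (n : ℕ) := EuclideanSpace ℝ (Fin n)

/-- Indices `(k, m)` of dyadic cubes in `ℝ^n`. -/
abbrev DIdx (n : ℕ) := ℤ × (Fin n → ℤ)

/-- The dyadic cube with index `q = (k, m)`, namely `2^{-k}(m + [0,1)^n)`. -/
def dCube (n : ℕ) (q : DIdx n) : Set (Euc n) :=
  {x | ∀ i, (q.2 i : ℝ) ≤ (2:ℝ) ^ q.1 * x i ∧ (2:ℝ) ^ q.1 * x i < (q.2 i : ℝ) + 1}

/-- The side length of the dyadic cube of index `q = (k, m)` is `2^{-k}`. -/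
def sideLen (n : ℕ) (q : DIdx n) : ℝ := (2:ℝ) ^ (-q.1)

/-- Characteristic function of a dyadic cube, with values in `ℝ≥0∞`. -/
def ch (n : ℕ) (q : DIdx n) (x : Euc n) : ℝ≥0∞ := (dCube n q).indicator 1 x

/-- `K̄(Q)(x) = σ(Q)⁻¹ ∑_{Q' ⊆ Q} K(Q') σ(Q') χ_{Q'}(x)`.
(Since `σ(Q') ≤ σ(Q)` for `Q' ⊆ Q`, this is automatically `0` when `σ(Q) = 0`,
by the convention `∞ · 0 = 0` in `ℝ≥0∞`.) -/
def Kbar (n : ℕ) (σ : Measure (Euc n)) (K : DIdx n → ℝ≥0∞) (q : DIdx n) (x : Euc n) : ℝ≥0∞ :=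
  (σ (dCube n q))⁻¹ *
    ∑' q' : DIdx n, if dCube n q' ⊆ dCube n q then K q' * σ (dCube n q') * ch n q' x else 0

lemma mem_dCube {n : ℕ} {j : ℤ} {m : Fin n → ℤ} {x : Euc n} :
    x ∈ dCube n (j, m) ↔ ∀ i, ⌊(2:ℝ) ^ j * x i⌋ = m i := by
  simp only [dCube, mem_setOf_eq, Int.floor_eq_iff]

lemma floor_div_pow_transfer {d : ℕ} {u v : ℝ} (h : ⌊u⌋ = ⌊v⌋) :
    ⌊u / 2 ^ d⌋ = ⌊v / 2 ^ d⌋ := by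
  set M := ⌊u⌋ with hM
  set c := ⌊(M : ℝ) / 2 ^ d⌋ with hc
  have hd : (0:ℝ) < 2 ^ d := by positivity
  have key : ∀ w : ℝ, ⌊w⌋ = M → ⌊w / 2 ^ d⌋ = c := by
    intro w hw
    have h1 : (M : ℝ) ≤ w := hw ▸ Int.floor_le w
    have h2 : w < M + 1 := hw ▸ Int.lt_floor_add_one w
    have hcle : (c : ℝ) ≤ (M : ℝ) / 2 ^ d := Int.floor_le _
    have hclt : (M : ℝ) / 2 ^ d < c + 1 := Int.lt_floor_add_one _
    have hMlt : (M : ℝ) < 2 ^ d * (c + 1) := by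
      rw [div_lt_iff₀ hd] at hclt; linarith [hclt]
    have hMlt' : M < 2 ^ d * (c + 1) := by exact_mod_cast hMlt
    have hM1 : (M : ℤ) + 1 ≤ 2 ^ d * (c + 1) := hMlt'
    have hM1' : (M : ℝ) + 1 ≤ 2 ^ d * (c + 1) := by exact_mod_cast hM1
    rw [Int.floor_eq_iff]
    constructor
    · calc (c : ℝ) ≤ (M : ℝ) / 2 ^ d := hcle
        _ ≤ w / 2 ^ d := by gcongr
    · calc w / 2 ^ d < ((M : ℝ) + 1) / 2 ^ d := by gcongr
        _ ≤ (c : ℝ) + 1 := by rw [div_le_iff₀ hd]; nlinarith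
  rw [key u hM.symm, key v h.symm]

lemma floor_zpow_transfer {j kk : ℤ} (h : kk ≤ j) {u v : ℝ}
    (hf : ⌊(2:ℝ) ^ j * u⌋ = ⌊(2:ℝ) ^ j * v⌋) : ⌊(2:ℝ) ^ kk * u⌋ = ⌊(2:ℝ) ^ kk * v⌋ := by
  have key : ∀ w : ℝ, (2:ℝ) ^ kk * w = ((2:ℝ) ^ j * w) / 2 ^ (j - kk).toNat := by
    intro w
    rw [_root_.eq_div_iff (by positivity)]
    have : ((2:ℝ) ^ (j - kk).toNat) = (2:ℝ) ^ (j - kk) := by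
      rw [← zpow_natCast, Int.toNat_of_nonneg (by omega)]
    rw [mul_assoc, mul_comm w, ← mul_assoc, this, ← zpow_add₀ (two_ne_zero), add_sub_cancel]
  rw [key u, key v]
  exact floor_div_pow_transfer hf

lemma cube_nested {n : ℕ} {a j : ℤ} {m : Fin n → ℤ} (h : a ≤ j) {x : Euc n}
    (hx : x ∈ dCube n (a, m)) :
    dCube n (j, fun i => ⌊(2:ℝ) ^ j * x i⌋) ⊆ dCube n (a, m) := by
  intro y hy
  rw [mem_dCube] at hx hy ⊢
  intro i
  have h1 : ⌊(2:ℝ) ^ j * y i⌋ = ⌊(2:ℝ) ^ j * x i⌋ := hy i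
  have h2 := floor_zpow_transfer h h1
  rw [h2, hx i]

lemma dCube_eq_preimage (n : ℕ) (j : ℤ) (m : Fin n → ℤ) :
    dCube n (j, m) = ((MeasurableEquiv.toLp 2 (Fin n → ℝ)).symm) ⁻¹'
      (univ.pi fun i => Ico ((m i : ℝ) / 2 ^ j) (((m i : ℝ) + 1) / 2 ^ j)) := by
  ext x
  simp only [dCube, mem_setOf_eq, mem_preimage, mem_pi, mem_univ, forall_true_left, mem_Ico]
  refine forall_congr' fun i => ?_
  have hp : (0:ℝ) < 2 ^ j := _root_.zpow_pos (by norm_num) j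
  rw [div_le_iff₀ hp, lt_div_iff₀ hp, mul_comm ((2:ℝ) ^ j) (x i)]
  rfl

lemma volume_dCube (n : ℕ) (q : DIdx n) :
    volume (dCube n q) = ENNReal.ofReal ((2:ℝ) ^ (-q.1)) ^ n := by
  obtain ⟨j, m⟩ := q
  rw [dCube_eq_preimage]
  rw [(EuclideanSpace.volume_preserving_symm_measurableEquiv_toLp (Fin n)).measure_preimage
    ((MeasurableSet.univ_pi (fun i => measurableSet_Ico)).nullMeasurableSet)]
  rw [volume_pi_pi]
  have : ∀ i : Fin n, volume (Ico ((m i : ℝ) / 2 ^ j) (((m i : ℝ) + 1) / 2 ^ j))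
      = ENNReal.ofReal ((2:ℝ) ^ (-j)) := by
    intro i
    rw [Real.volume_Ico]
    congr 1
    rw [div_sub_div_same, add_sub_cancel_left, one_div, ← zpow_neg]
  simp only [this, Finset.prod_const, Finset.card_univ, Fintype.card_fin]

lemma measurableSet_dCube (n : ℕ) (q : DIdx n) : MeasurableSet (dCube n q) := by
  obtain ⟨j, m⟩ := q
  rw [dCube_eq_preimage]
  exact ((MeasurableEquiv.toLp 2 (Fin n → ℝ)).symm).measurable
    (MeasurableSet.univ_pi (fun i => measurableSet_Ico))

lemma level_mono {n : ℕ} (hn : 0 < n) {q q' : DIdx n} (h : dCube n q' ⊆ dCube n q) :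
    q.1 ≤ q'.1 := by
  have hv := measure_mono (μ := volume) h
  rw [volume_dCube, volume_dCube] at hv
  rw [← ENNReal.ofReal_pow (_root_.zpow_pos (by norm_num) _).le,
    ← ENNReal.ofReal_pow (_root_.zpow_pos (by norm_num) _).le,
    ENNReal.ofReal_le_ofReal_iff (by positivity)] at hv
  have h2 : (2:ℝ) ^ (-q'.1) ≤ 2 ^ (-q.1) :=
    (pow_le_pow_iff_left₀ (_root_.zpow_pos (by norm_num) _).le (_root_.zpow_pos (by norm_num) _).le
      hn.ne').mp hv
  have := (zpow_le_zpow_iff_right₀ (by norm_num : (1:ℝ) < 2)).mp h2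
  omega

lemma tsum_Kbar_eq {n : ℕ} (hn : 0 < n) (k : ℝ → ℝ) {a : ℤ} {m : Fin n → ℤ} {x : Euc n}
    (hx : x ∈ dCube n (a, m)) :
    (∑' q' : DIdx n, if dCube n q' ⊆ dCube n (a, m) then
        ENNReal.ofReal (k (sideLen n q')) * volume (dCube n q') * ch n q' x else 0)
      = ∑' i : ℕ, ENNReal.ofReal (k ((2:ℝ) ^ (-(a + (i:ℤ)))))
          * ENNReal.ofReal ((2:ℝ) ^ (-(a + (i:ℤ)))) ^ n := by
  set f : DIdx n → ℝ≥0∞ := fun q' => if dCube n q' ⊆ dCube n (a, m) then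
      ENNReal.ofReal (k (sideLen n q')) * volume (dCube n q') * ch n q' x else 0 with hf
  set e : ℕ → DIdx n := fun i => ((a + (i:ℤ), fun l => ⌊(2:ℝ) ^ (a + (i:ℤ)) * x l⌋) : DIdx n)
    with he
  have hinj : Function.Injective e := by
    intro i j hij
    have h1 : a + (i:ℤ) = a + (j:ℤ) := congrArg Prod.fst hij
    omega
  have hsupp : Function.support f ⊆ Set.range e := by
    intro q' hq'
    simp only [Function.mem_support, hf] at hq'
    by_cases hsub : dCube n q' ⊆ dCube n (a, m)
    · rw [if_pos hsub] at hq'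
      have hch : ch n q' x ≠ 0 := fun h0 => hq' (by rw [h0, mul_zero])
      have hxq : x ∈ dCube n q' := by
        by_contra hxx
        exact hch (by simp [ch, indicator_of_notMem hxx])
      have hlev : a ≤ q'.1 := level_mono hn hsub
      refine ⟨(q'.1 - a).toNat, ?_⟩
      obtain ⟨j, mm⟩ := q'
      simp only at hlev
      have hj : a + (((j - a).toNat : ℕ) : ℤ) = j := by omega
      rw [mem_dCube] at hxq
      simp only [he, hj]
      exact Prod.ext rfl (funext fun l => hxq l)
    · rw [if_neg hsub] at hq'; exact absurd rfl hq'
  rw [← hinj.tsum_eq hsupp]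
  refine tsum_congr fun i => ?_
  have hsub : dCube n (e i) ⊆ dCube n (a, m) := cube_nested (by omega) hx
  have hxe : x ∈ dCube n (e i) := mem_dCube.mpr fun l => rfl
  simp only [hf, he, if_pos hsub]
  rw [show ch n (a + (i:ℤ), fun l => ⌊(2:ℝ) ^ (a + (i:ℤ)) * x l⌋) x = 1 from by
      exact indicator_of_mem hxe 1, mul_one]
  rw [volume_dCube, if_pos hsub]
  rfl

def dyInt (a : ℤ) (i : ℕ) : Set ℝ := Ico ((2:ℝ) ^ (-(a + (i:ℤ)) - 1)) ((2:ℝ) ^ (-(a + (i:ℤ))))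

lemma iUnion_dyInt (a : ℤ) : (⋃ i : ℕ, dyInt a i) = Ioo 0 ((2:ℝ) ^ (-a)) := by
  ext t
  simp only [mem_iUnion, dyInt, mem_Ico, mem_Ioo]
  constructor
  · rintro ⟨i, h1, h2⟩
    exact ⟨lt_of_lt_of_le (_root_.zpow_pos (by norm_num) _) h1,
      lt_of_lt_of_le h2 (zpow_le_zpow_right₀ one_le_two (by omega))⟩
  · rintro ⟨h1, h2⟩
    obtain ⟨z, hz1, hz2⟩ := exists_mem_Ico_zpow h1 (one_lt_two (α := ℝ))
    have hzle : z + 1 ≤ -a := by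
      by_contra hcon
      push_neg at hcon
      have : (2:ℝ) ^ (-a) ≤ 2 ^ z := zpow_le_zpow_right₀ one_le_two (by omega)
      linarith
    refine ⟨(-a - 1 - z).toNat, ?_, ?_⟩
    · have hze : (-(a + (((-a - 1 - z).toNat : ℕ) : ℤ)) - 1) = z := by omega
      rw [hze]; exact hz1
    · have hze : (-(a + (((-a - 1 - z).toNat : ℕ) : ℤ))) = z + 1 := by omega
      rw [hze]; exact hz2

lemma disjoint_dyInt (a : ℤ) : Pairwise (Function.onFun Disjoint (dyInt a)) := by
  have key : ∀ i j : ℕ, i < j → Disjoint (dyInt a i) (dyInt a j) := by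
    intro i j hij
    rw [Set.disjoint_left]
    rintro t ⟨hi1, _⟩ ⟨_, hj2⟩
    have : (2:ℝ) ^ (-(a + (j:ℤ))) ≤ 2 ^ (-(a + (i:ℤ)) - 1) :=
      zpow_le_zpow_right₀ one_le_two (by omega)
    linarith
  intro i j hij
  rcases lt_or_gt_of_ne hij with h | h
  · exact key i j h
  · exact (key j i h).symm

lemma zpow_pow_helper (c : ℤ) (nn : ℕ) : ((2:ℝ) ^ c) ^ nn = 2 ^ (c * nn) := by
  rw [← zpow_natCast ((2:ℝ) ^ c) nn, ← zpow_mul]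

lemma rpow_eq_pow_pred {n : ℕ} (hn : 0 < n) {t : ℝ} (ht : 0 < t) :
    t ^ ((n:ℝ) - 1) = t ^ (n - 1 : ℕ) := by
  have : ((n:ℝ) - 1) = ((n - 1 : ℕ) : ℝ) := by
    have : (1:ℕ) ≤ n := hn
    push_cast [Nat.cast_sub this]
    ring
  rw [this, Real.rpow_natCast]

lemma integral_piece_lower {n : ℕ} (hn : 0 < n) {k : ℝ → ℝ} (hk0 : ∀ r ∈ Ioi (0:ℝ), 0 ≤ k r)
    (hmono : AntitoneOn k (Ioi (0:ℝ))) (b : ℤ) :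
    ENNReal.ofReal (k ((2:ℝ) ^ b)) * ENNReal.ofReal ((2:ℝ) ^ b) ^ n
      ≤ (2:ℝ≥0∞) ^ n *
        ∫⁻ t in Ico ((2:ℝ) ^ (b-1)) ((2:ℝ) ^ b), ENNReal.ofReal (k t * t ^ ((n:ℝ) - 1)) := by
  have hb1 : (0:ℝ) < 2 ^ (b-1) := _root_.zpow_pos (by norm_num) _
  have hb : (0:ℝ) < 2 ^ b := _root_.zpow_pos (by norm_num) _
  have hkb : 0 ≤ k ((2:ℝ) ^ b) := hk0 _ hb
  set c : ℝ≥0∞ := ENNReal.ofReal (k ((2:ℝ) ^ b) * ((2:ℝ) ^ (b-1)) ^ (n - 1 : ℕ)) with hc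
  have hpoint : ∀ t ∈ Ico ((2:ℝ) ^ (b-1)) ((2:ℝ) ^ b),
      c ≤ ENNReal.ofReal (k t * t ^ ((n:ℝ) - 1)) := by
    rintro t ⟨ht1, ht2⟩
    have ht0 : 0 < t := lt_of_lt_of_le hb1 ht1
    rw [rpow_eq_pow_pred hn ht0]
    refine ENNReal.ofReal_le_ofReal ?_
    have hkk : k ((2:ℝ) ^ b) ≤ k t := hmono ht0 hb ht2.le
    have hpw : ((2:ℝ) ^ (b-1)) ^ (n - 1 : ℕ) ≤ t ^ (n - 1 : ℕ) :=
      pow_le_pow_left₀ hb1.le ht1 _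
    exact mul_le_mul hkk hpw (by positivity) (hk0 _ ht0)
  have hint : c * ENNReal.ofReal ((2:ℝ) ^ (b-1))
      ≤ ∫⁻ t in Ico ((2:ℝ) ^ (b-1)) ((2:ℝ) ^ b), ENNReal.ofReal (k t * t ^ ((n:ℝ) - 1)) := by
    have hvol : volume (Ico ((2:ℝ) ^ (b-1)) ((2:ℝ) ^ b)) = ENNReal.ofReal ((2:ℝ) ^ (b-1)) := by
      rw [Real.volume_Ico]
      congr 1
      have h2 : (2:ℝ) ^ b = 2 ^ (b-1) * 2 := by
        rw [← zpow_add_one₀ (two_ne_zero : (2:ℝ) ≠ 0) (b-1), sub_add_cancel]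
      linarith
    rw [← hvol, ← lintegral_indicator_const measurableSet_Ico c,
      ← lintegral_indicator measurableSet_Ico]
    refine lintegral_mono fun t => ?_
    by_cases ht : t ∈ Ico ((2:ℝ) ^ (b-1)) ((2:ℝ) ^ b)
    · rw [indicator_of_mem ht, indicator_of_mem ht]; exact hpoint t ht
    · rw [indicator_of_notMem ht, indicator_of_notMem ht]
  refine le_trans ?_ (mul_le_mul_right hint _)
  rw [hc, ← ENNReal.ofReal_pow hb.le, ← ENNReal.ofReal_mul hkb,
    ← ENNReal.ofReal_mul (by positivity),
    show ((2:ℝ≥0∞) ^ n) = ENNReal.ofReal ((2:ℝ) ^ (n:ℕ)) from by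
      rw [ENNReal.ofReal_pow (by norm_num), ENNReal.ofReal_ofNat],
    ← ENNReal.ofReal_mul (by positivity)]
  refine ENNReal.ofReal_le_ofReal (le_of_eq ?_)
  have h2 : (2:ℝ) ^ b = 2 * 2 ^ (b-1) := by
    rw [mul_comm, ← zpow_add_one₀ (two_ne_zero : (2:ℝ) ≠ 0) (b-1), sub_add_cancel]
  have key : ((2:ℝ) ^ b) ^ n = 2 ^ n * (((2:ℝ) ^ (b-1)) ^ (n - 1 : ℕ) * 2 ^ (b-1)) := by
    rw [h2, mul_pow, ← pow_succ, Nat.sub_add_cancel hn]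
  rw [key]; ring

lemma integral_piece_upper {n : ℕ} (hn : 0 < n) {k : ℝ → ℝ} (hk0 : ∀ r ∈ Ioi (0:ℝ), 0 ≤ k r)
    (hmono : AntitoneOn k (Ioi (0:ℝ))) (b : ℤ) :
    (∫⁻ t in Ico ((2:ℝ) ^ (b-1)) ((2:ℝ) ^ b), ENNReal.ofReal (k t * t ^ ((n:ℝ) - 1)))
      ≤ (2:ℝ≥0∞) ^ n *
        (ENNReal.ofReal (k ((2:ℝ) ^ (b-1))) * ENNReal.ofReal ((2:ℝ) ^ (b-1)) ^ n) := by
  have hb1 : (0:ℝ) < 2 ^ (b-1) := _root_.zpow_pos (by norm_num) _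
  have hb : (0:ℝ) < 2 ^ b := _root_.zpow_pos (by norm_num) _
  have hkb : 0 ≤ k ((2:ℝ) ^ (b-1)) := hk0 _ hb1
  set c : ℝ≥0∞ := ENNReal.ofReal (k ((2:ℝ) ^ (b-1)) * ((2:ℝ) ^ b) ^ (n - 1 : ℕ)) with hc
  have hpoint : ∀ t ∈ Ico ((2:ℝ) ^ (b-1)) ((2:ℝ) ^ b),
      ENNReal.ofReal (k t * t ^ ((n:ℝ) - 1)) ≤ c := by
    rintro t ⟨ht1, ht2⟩
    have ht0 : 0 < t := lt_of_lt_of_le hb1 ht1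
    rw [rpow_eq_pow_pred hn ht0]
    refine ENNReal.ofReal_le_ofReal ?_
    have hkk : k t ≤ k ((2:ℝ) ^ (b-1)) := hmono hb1 ht0 ht1
    have hpw : t ^ (n - 1 : ℕ) ≤ ((2:ℝ) ^ b) ^ (n - 1 : ℕ) :=
      pow_le_pow_left₀ ht0.le ht2.le _
    exact mul_le_mul hkk hpw (by positivity) hkb
  have hvol : volume (Ico ((2:ℝ) ^ (b-1)) ((2:ℝ) ^ b)) = ENNReal.ofReal ((2:ℝ) ^ (b-1)) := by
    rw [Real.volume_Ico]
    congr 1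
    have h2 : (2:ℝ) ^ b = 2 ^ (b-1) * 2 := by
      rw [← zpow_add_one₀ (two_ne_zero : (2:ℝ) ≠ 0) (b-1), sub_add_cancel]
    linarith
  have hint : (∫⁻ t in Ico ((2:ℝ) ^ (b-1)) ((2:ℝ) ^ b), ENNReal.ofReal (k t * t ^ ((n:ℝ) - 1)))
      ≤ c * ENNReal.ofReal ((2:ℝ) ^ (b-1)) := by
    rw [← hvol, ← lintegral_indicator_const measurableSet_Ico c,
      ← lintegral_indicator measurableSet_Ico]
    refine lintegral_mono fun t => ?_
    by_cases ht : t ∈ Ico ((2:ℝ) ^ (b-1)) ((2:ℝ) ^ b)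
    · rw [indicator_of_mem ht, indicator_of_mem ht]; exact hpoint t ht
    · rw [indicator_of_notMem ht, indicator_of_notMem ht]
  refine hint.trans ?_
  rw [hc, ← ENNReal.ofReal_pow hb1.le, ← ENNReal.ofReal_mul hkb,
    ← ENNReal.ofReal_mul (by positivity),
    show ((2:ℝ≥0∞) ^ n) = ENNReal.ofReal ((2:ℝ) ^ (n:ℕ)) from by
      rw [ENNReal.ofReal_pow (by norm_num), ENNReal.ofReal_ofNat],
    ← ENNReal.ofReal_mul (by positivity)]
  refine ENNReal.ofReal_le_ofReal ?_
  have h2 : (2:ℝ) ^ b = 2 * 2 ^ (b-1) := by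
    rw [mul_comm, ← zpow_add_one₀ (two_ne_zero : (2:ℝ) ≠ 0) (b-1), sub_add_cancel]
  have key : 2 ^ n * ((2:ℝ) ^ (b-1)) ^ n = ((2:ℝ) ^ b) ^ (n - 1 : ℕ) * 2 ^ b := by
    rw [← mul_pow, ← h2, ← pow_succ, Nat.sub_add_cancel hn]
  have hle : (2:ℝ) ^ (b-1) ≤ 2 ^ b := zpow_le_zpow_right₀ one_le_two (by omega)
  calc k ((2:ℝ) ^ (b-1)) * ((2:ℝ) ^ b) ^ (n - 1 : ℕ) * 2 ^ (b-1)
      ≤ k ((2:ℝ) ^ (b-1)) * ((2:ℝ) ^ b) ^ (n - 1 : ℕ) * 2 ^ b := by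
        refine mul_le_mul_of_nonneg_left hle (by positivity)
    _ = 2 ^ n * (k ((2:ℝ) ^ (b-1)) * ((2:ℝ) ^ (b-1)) ^ n) := by
        rw [show 2 ^ n * (k ((2:ℝ) ^ (b-1)) * ((2:ℝ) ^ (b-1)) ^ n)
            = k ((2:ℝ) ^ (b-1)) * (2 ^ n * ((2:ℝ) ^ (b-1)) ^ n) from by ring, key]
        ring

/-- If `k : (0,∞) → [0,∞)` is nonincreasing, `σ` is Lebesgue measure on
`ℝ^n`, and `K(Q) = k(r_Q)`, then there is a constant `C > 0`, independent of `Q`, such that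
for every dyadic cube `Q` and every `x ∈ Q`,
`(1/C) r_Q^{-n} ∫_0^{r_Q} k(t) t^{n-1} dt ≤ K̄(Q)(x) ≤ C r_Q^{-n} ∫_0^{r_Q} k(t) t^{n-1} dt`. -/
theorem stmt4 (n : ℕ) (hn : 0 < n) (k : ℝ → ℝ)
    (hk0 : ∀ r ∈ Ioi (0:ℝ), 0 ≤ k r) (hmono : AntitoneOn k (Ioi (0:ℝ))) :
    ∃ C : ℝ, 0 < C ∧
      ∀ Q : DIdx n, ∀ x ∈ dCube n Q,
        ENNReal.ofReal (C⁻¹ * (sideLen n Q) ^ (-(n:ℝ))) *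
            (∫⁻ t in Ioo (0:ℝ) (sideLen n Q), ENNReal.ofReal (k t * t ^ ((n:ℝ) - 1))) ≤
          Kbar n volume (fun q => ENNReal.ofReal (k (sideLen n q))) Q x ∧
        Kbar n volume (fun q => ENNReal.ofReal (k (sideLen n q))) Q x ≤
          ENNReal.ofReal (C * (sideLen n Q) ^ (-(n:ℝ))) *
            ∫⁻ t in Ioo (0:ℝ) (sideLen n Q), ENNReal.ofReal (k t * t ^ ((n:ℝ) - 1)) := by
  refine ⟨(2:ℝ) ^ n, by positivity, ?_⟩
  rintro ⟨a, m⟩ x hx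
  -- notation
  set s : ℝ := (2:ℝ) ^ (-a) with hs_def
  have hside : sideLen n ((a, m) : DIdx n) = s := rfl
  have hs : 0 < s := _root_.zpow_pos (by norm_num) _
  set T2 : ℝ≥0∞ := (2:ℝ≥0∞) ^ n with hT2
  set F : ℕ → ℝ≥0∞ := fun i => ENNReal.ofReal (k ((2:ℝ) ^ (-(a + (i:ℤ)))))
    * ENNReal.ofReal ((2:ℝ) ^ (-(a + (i:ℤ)))) ^ n with hF
  set S : ℝ≥0∞ := ∑' i : ℕ, F i with hS
  set g : ℝ → ℝ≥0∞ := fun t => ENNReal.ofReal (k t * t ^ ((n:ℝ) - 1)) with hg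
  set L : ℝ≥0∞ := ∫⁻ t in Ioo (0:ℝ) s, g t with hL
  set II : ℕ → ℝ≥0∞ := fun i => ∫⁻ t in dyInt a i, g t with hII
  -- Kbar computation
  have hKbar : Kbar n volume (fun q => ENNReal.ofReal (k (sideLen n q))) (a, m) x
      = (volume (dCube n ((a, m) : DIdx n)))⁻¹ * S := by
    rw [Kbar, tsum_Kbar_eq hn k hx]
  -- volume inverse
  have hV : volume (dCube n ((a, m) : DIdx n)) = ENNReal.ofReal (s ^ n) := by
    rw [volume_dCube, ENNReal.ofReal_pow hs.le]
  have hVinv : (volume (dCube n ((a, m) : DIdx n)))⁻¹ = ENNReal.ofReal ((s ^ n)⁻¹) := by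
    rw [hV, ENNReal.ofReal_inv_of_pos (by positivity)]
  -- integral decomposition
  have hLsum : L = ∑' i : ℕ, II i := by
    rw [hL, ← iUnion_dyInt a]
    exact lintegral_iUnion (fun i => measurableSet_Ico) (disjoint_dyInt a) g
  -- S ≤ T2 * L
  have hSL : S ≤ T2 * L := by
    rw [hLsum, ← ENNReal.tsum_mul_left]
    refine ENNReal.tsum_le_tsum fun i => ?_
    have := integral_piece_lower hn hk0 hmono (-(a + (i:ℤ)))
    exact this
  -- L ≤ T2 * S
  have hLS : L ≤ T2 * S := by
    have hterm : ∀ i : ℕ, II i ≤ T2 * F (i + 1) := by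
      intro i
      have hcast : -(a + (((i+1:ℕ)):ℤ)) = (-(a + ((i:ℕ):ℤ)) - 1) := by push_cast; ring
      simp only [hII, hF, hT2]
      rw [hcast]
      exact integral_piece_upper hn hk0 hmono (-(a + (i:ℤ)))
    calc L = ∑' i : ℕ, II i := hLsum
      _ ≤ ∑' i : ℕ, T2 * F (i + 1) := ENNReal.tsum_le_tsum hterm
      _ = T2 * ∑' i : ℕ, F (i + 1) := ENNReal.tsum_mul_left
      _ ≤ T2 * S := by
          refine mul_le_mul_right ?_ _
          exact tsum_comp_le_tsum_of_injective (add_left_injective 1) F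
  -- ENNReal constants
  have hT2eq : ENNReal.ofReal ((2:ℝ) ^ n) = T2 := by
    rw [ENNReal.ofReal_pow (by norm_num), ENNReal.ofReal_ofNat]
  have hT2inv : ENNReal.ofReal (((2:ℝ) ^ n)⁻¹) = T2⁻¹ := by
    rw [ENNReal.ofReal_inv_of_pos (by positivity), hT2eq]
  have hT2ne0 : T2 ≠ 0 := by
    rw [hT2]; exact pow_ne_zero _ (by norm_num)
  have hT2netop : T2 ≠ ⊤ := by
    rw [hT2]; exact ENNReal.pow_ne_top (by norm_num)
  have hrpow : s ^ (-(n:ℝ)) = (s ^ n)⁻¹ := by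
    rw [Real.rpow_neg hs.le, Real.rpow_natCast]
  rw [hside, hKbar, hVinv, hrpow]
  constructor
  · calc ENNReal.ofReal (((2:ℝ) ^ n)⁻¹ * (s ^ n)⁻¹) * L
        = T2⁻¹ * ENNReal.ofReal ((s ^ n)⁻¹) * L := by
          rw [ENNReal.ofReal_mul (by positivity), hT2inv]
      _ ≤ T2⁻¹ * ENNReal.ofReal ((s ^ n)⁻¹) * (T2 * S) := mul_le_mul_right hLS _
      _ = (T2⁻¹ * T2) * (ENNReal.ofReal ((s ^ n)⁻¹) * S) := by ring
      _ = ENNReal.ofReal ((s ^ n)⁻¹) * S := by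
          rw [ENNReal.inv_mul_cancel hT2ne0 hT2netop, one_mul]
  · calc ENNReal.ofReal ((s ^ n)⁻¹) * S
        ≤ ENNReal.ofReal ((s ^ n)⁻¹) * (T2 * L) := mul_le_mul_right hSL _
      _ = (ENNReal.ofReal ((s ^ n)⁻¹) * T2) * L := by ring
      _ = ENNReal.ofReal ((2:ℝ) ^ n * (s ^ n)⁻¹) * L := by
          rw [ENNReal.ofReal_mul (by positivity), hT2eq]; ring_nf
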